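/- Let η = (η₁, η₂) ∈ ℝ² be nonzero. Suppose complex numbers h_{αβ} (0 ≤ α,β ≤ 2, symmetric), v, σ satisfy: (1) |η|h₀₀ - iη₁h₁₀ - iη₂h₂₀ = 0; (2) |η|h₀₁ - iη₁h₁₁ - iη₂h₂₁ = 0; (3) |η|h₀₂ - iη₁h₁₂ - iη₂h₂₂ = 0; (4) -2v + h₁₁ = 0; (5) h₁₂ = 0; (6) -2v + h₂₂ = 0; (7) -½|η|(h₁₁+h₂₂) - iη₁h₁₀ - iη₂h₂₀ + 2|η|v = 0; (8) -|η|σ = 0. Then all h_{αβ} = 0, v = 0, σ = 0. -/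
import Mathlib


/- STATEMENT 1: Nondegeneracy of the boundary symbol for the divergence gauge
(Lemma 3.2 of the paper). -/

open Complex

theorem stmt_1 (η1 η2 : ℝ) (hη : ¬(η1 = 0 ∧ η2 = 0))
    (N : ℝ) (hN : N = Real.sqrt (η1 ^ 2 + η2 ^ 2))
    (h : Fin 3 → Fin 3 → ℂ) (v σ : ℂ)
    (hsym : ∀ a b, h a b = h b a)
    (e1 : (N : ℂ) * h 0 0 - I * (η1 : ℂ) * h 1 0 - I * (η2 : ℂ) * h 2 0 = 0)
    (e2 : (N : ℂ) * h 0 1 - I * (η1 : ℂ) * h 1 1 - I * (η2 : ℂ) * h 2 1 = 0)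
    (e3 : (N : ℂ) * h 0 2 - I * (η1 : ℂ) * h 1 2 - I * (η2 : ℂ) * h 2 2 = 0)
    (e4 : -2 * v + h 1 1 = 0)
    (e5 : h 1 2 = 0)
    (e6 : -2 * v + h 2 2 = 0)
    (e7 : -(1 / 2 : ℂ) * (N : ℂ) * (h 1 1 + h 2 2) - I * (η1 : ℂ) * h 1 0
        - I * (η2 : ℂ) * h 2 0 + 2 * (N : ℂ) * v = 0)
    (e8 : -(N : ℂ) * σ = 0) :
    (∀ a b, h a b = 0) ∧ v = 0 ∧ σ = 0 := by
  have hpos : 0 < η1 ^ 2 + η2 ^ 2 := by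
    rw [not_and_or] at hη
    rcases hη with h1 | h1 <;> positivity
  have hNpos : 0 < N := by rw [hN]; exact Real.sqrt_pos.mpr hpos
  have hN0 : (N : ℂ) ≠ 0 := by exact_mod_cast hNpos.ne'
  have hsum0 : ((η1 : ℂ) ^ 2 + (η2 : ℂ) ^ 2) ≠ 0 := by
    have : ((η1 ^ 2 + η2 ^ 2 : ℝ) : ℂ) ≠ 0 := by exact_mod_cast hpos.ne'
    push_cast at this
    exact this
  have key : 2 * ((η1 : ℂ) ^ 2 + (η2 : ℂ) ^ 2) * v = 0 := by
    linear_combination (N : ℂ) * e7 + I * (η1 : ℂ) * e2 + I * (η2 : ℂ) * e3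
      + I * (η1 : ℂ) * (N : ℂ) * (hsym 1 0) + I * (η2 : ℂ) * (N : ℂ) * (hsym 2 0)
      + ((N : ℂ) ^ 2 / 2 - (η1 : ℂ) ^ 2) * e4 + ((N : ℂ) ^ 2 / 2 - (η2 : ℂ) ^ 2) * e6
      - 2 * (η1 : ℂ) * (η2 : ℂ) * e5 - (η1 : ℂ) * (η2 : ℂ) * (hsym 2 1)
      + ((η1:ℂ)*(η2:ℂ)*(h 1 2 + h 2 1) + (η1:ℂ)^2 * h 1 1 + (η2:ℂ)^2 * h 2 2) * Complex.I_sq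
  have hv : v = 0 := by
    rcases mul_eq_zero.mp key with hk | hk
    · exact absurd hk (by simpa [mul_eq_zero] using hsum0)
    · exact hk
  have h11 : h 1 1 = 0 := by linear_combination e4 + 2 * hv
  have h22 : h 2 2 = 0 := by linear_combination e6 + 2 * hv
  have h12 : h 1 2 = 0 := e5
  have h21 : h 2 1 = 0 := by rw [hsym 2 1]; exact e5
  have h01 : h 0 1 = 0 := by
    have : (N : ℂ) * h 0 1 = 0 := by linear_combination e2 + I * (η1:ℂ) * h11 + I * (η2:ℂ) * h21
    exact (mul_eq_zero.mp this).resolve_left hN0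
  have h02 : h 0 2 = 0 := by
    have : (N : ℂ) * h 0 2 = 0 := by linear_combination e3 + I * (η1:ℂ) * h12 + I * (η2:ℂ) * h22
    exact (mul_eq_zero.mp this).resolve_left hN0
  have h10 : h 1 0 = 0 := by rw [hsym 1 0]; exact h01
  have h20 : h 2 0 = 0 := by rw [hsym 2 0]; exact h02
  have h00 : h 0 0 = 0 := by
    have : (N : ℂ) * h 0 0 = 0 := by linear_combination e1 + I * (η1:ℂ) * h10 + I * (η2:ℂ) * h20
    exact (mul_eq_zero.mp this).resolve_left hN0
  have hσ : σ = 0 := by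
    have : (N : ℂ) * σ = 0 := by linear_combination -e8
    exact (mul_eq_zero.mp this).resolve_left hN0
  refine ⟨?_, hv, hσ⟩
  intro a b
  fin_cases a <;> fin_cases b <;> assumption
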